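/- Let A be an associative unital algebra over a field of characteristic zero, let a, b, d ∈ A with a nilpotent, and let α_1, α_2, … be the Taylor coefficients of the Todd function x/(e^x - 1) = 1 + α_1 x + α_2 x^2 + ⋯. Then exp(a)·d = (d+b)·exp(a) holds if and only if [a,d] = b + Σ_{k≥1} α_k (ad_a)^k(b), where ad_a(x)=[a,x] and the sum is finite by nilpotency of a. -/

import Mathlib

noncomputable def expNil {K A : Type*} [Field K] [Ring A] [Algebra K A]
    (a : A) (N : ℕ) : A :=
  ∑ k ∈ Finset.range N, (k.factorial : K)⁻¹ • a ^ k

/-- Taylor coefficients of the Todd function `x/(e^x - 1)`, defined as the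
multiplicative inverse of `(e^x-1)/x = ∑ x^k/(k+1)!` in `ℚ[[x]]`. -/
noncomputable def toddCoeff (k : ℕ) : ℚ :=
  PowerSeries.coeff (R := ℚ) k (PowerSeries.mk fun n => (1 : ℚ) / (n + 1).factorial)⁻¹

open Finset

set_option linter.unusedSectionVars false


open Finset

lemma triangle_sum {β : Type*} [AddCommMonoid β] (n : ℕ) (f : ℕ → ℕ → β) :
    ∑ k ∈ range n, ∑ i ∈ range (k+1), f i (k-i)
      = ∑ i ∈ range n, ∑ j ∈ range (n - i), f i j := by
  induction n with
  | zero => simp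
  | succ n ih =>
    rw [sum_range_succ, ih, sum_range_succ _ n, sum_range_succ]
    have h1 : ∀ i ∈ range n, ∑ j ∈ range (n + 1 - i), f i j
        = (∑ j ∈ range (n - i), f i j) + f i (n - i) := by
      intro i hi
      rw [Nat.succ_sub (le_of_lt (mem_range.mp hi)), sum_range_succ]
    rw [sum_congr rfl h1, sum_add_distrib]
    simp [Nat.sub_self]
    abel

section
variable {K B : Type*} [Field K] [Ring B] [Algebra K B]

lemma psum_trunc (c : ℕ → K) (x : B) {m M : ℕ} (hx : x ^ m = 0) (h : m ≤ M) :
    ∑ k ∈ range M, c k • x ^ k = ∑ k ∈ range m, c k • x ^ k := by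
  refine (Finset.sum_subset (range_subset_range.mpr h) ?_).symm
  intro k _ hk
  rw [pow_eq_zero_of_le (by simpa using le_of_not_gt (fun h' => hk (mem_range.mpr h'))) hx,
    smul_zero]

lemma psum_mul (c d : ℕ → K) (x : B) {M : ℕ} (hx : x ^ M = 0) :
    (∑ k ∈ range M, c k • x ^ k) * (∑ k ∈ range M, d k • x ^ k)
      = ∑ k ∈ range M, (∑ i ∈ range (k+1), c i * d (k-i)) • x ^ k := by
  symm
  calc ∑ k ∈ range M, (∑ i ∈ range (k+1), c i * d (k-i)) • x ^ k
      = ∑ k ∈ range M, ∑ i ∈ range (k+1), (c i * d (k-i)) • x ^ (i + (k-i)) := by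
        refine sum_congr rfl fun k _ => ?_
        rw [sum_smul]
        refine sum_congr rfl fun i hi => ?_
        rw [Nat.add_sub_cancel' (Nat.lt_succ_iff.mp (mem_range.mp hi))]
    _ = ∑ i ∈ range M, ∑ j ∈ range (M - i), (c i * d j) • x ^ (i + j) :=
        triangle_sum M (fun i j => (c i * d j) • x ^ (i + j))
    _ = ∑ i ∈ range M, ∑ j ∈ range M, (c i * d j) • x ^ (i + j) := by
        refine sum_congr rfl fun i hi => Finset.sum_subset (range_subset_range.mpr (Nat.sub_le _ _)) ?_
        intro j _ hj
        have hj' : M - i ≤ j := le_of_not_gt (fun h' => hj (mem_range.mpr h'))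
        have hiM := mem_range.mp hi
        have : M ≤ i + j := by omega
        rw [pow_eq_zero_of_le this hx, smul_zero]
    _ = (∑ k ∈ range M, c k • x ^ k) * (∑ k ∈ range M, d k • x ^ k) := by
        rw [Finset.sum_mul_sum]
        refine sum_congr rfl fun i _ => sum_congr rfl fun j _ => ?_
        rw [smul_mul_smul_comm, pow_add]
end

open Finset


section
variable {K : Type*} [Field K] [CharZero K]

lemma fac_ne (n : ℕ) : ((n.factorial : K)) ≠ 0 :=
  Nat.cast_ne_zero.mpr (Nat.factorial_ne_zero n)

lemma fac_choose {i k : ℕ} (h : i ≤ k) :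
    (k.factorial : K)⁻¹ * (k.choose i : K) = (i.factorial : K)⁻¹ * ((k-i).factorial : K)⁻¹ := by
  have h2 := Nat.choose_mul_factorial_mul_factorial h
  have h3 : ((k.choose i : ℕ) : K) * (i.factorial : K) * ((k-i).factorial : K) = (k.factorial : K) := by
    exact_mod_cast congrArg (Nat.cast : ℕ → K) h2
  have h4 := fac_ne (K := K) i
  have h5 := fac_ne (K := K) (k - i)
  have h6 := fac_ne (K := K) k
  field_simp
  linear_combination h3

lemma exp_conv (k : ℕ) :
    ∑ i ∈ range (k+1), ((-1:K) ^ i * (i.factorial : K)⁻¹) * ((k-i).factorial : K)⁻¹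
      = if k = 0 then 1 else 0 := by
  have h0 : ∀ i ∈ range (k+1), ((-1:K) ^ i * (i.factorial : K)⁻¹) * ((k-i).factorial : K)⁻¹
      = (k.factorial : K)⁻¹ * ((-1:K) ^ i * (k.choose i : K)) := by
    intro i hi
    rw [mul_assoc, ← fac_choose (Nat.lt_succ_iff.mp (mem_range.mp hi))]
    ring
  rw [sum_congr rfl h0, ← mul_sum]
  have := @Int.alternating_sum_range_choose k
  have h1 : ∑ i ∈ range (k+1), ((-1:K) ^ i * (k.choose i : K)) = if k = 0 then 1 else 0 := by
    exact_mod_cast congrArg (Int.cast : ℤ → K) this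
  rw [h1]
  rcases eq_or_ne k 0 with rfl | h
  · simp
  · simp [h]

lemma exp_conv' (k : ℕ) :
    ∑ i ∈ range (k+1), (i.factorial : K)⁻¹ * ((-1:K) ^ (k-i) * ((k-i).factorial : K)⁻¹)
      = if k = 0 then 1 else 0 := by
  rw [← Finset.sum_range_reflect]
  rw [← exp_conv (K := K) k]
  refine sum_congr rfl fun i hi => ?_
  have hik : i ≤ k := Nat.lt_succ_iff.mp (mem_range.mp hi)
  have : k + 1 - 1 - i = k - i := by omega
  rw [this, Nat.sub_sub_self hik]
  ring
end

lemma todd_conv (k : ℕ) :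
    ∑ i ∈ range (k+1), ((1:ℚ) / (i+1).factorial) * toddCoeff (k-i)
      = if k = 0 then 1 else 0 := by
  set F : PowerSeries ℚ := PowerSeries.mk fun n => (1 : ℚ) / (n + 1).factorial with hF
  have hc : PowerSeries.constantCoeff F ≠ 0 := by
    simp [hF, PowerSeries.constantCoeff_mk]
  have h := congrArg (PowerSeries.coeff k) (PowerSeries.mul_inv_cancel F hc)
  rw [PowerSeries.coeff_mul, PowerSeries.coeff_one,
    Finset.Nat.sum_antidiagonal_eq_sum_range_succ_mk] at h
  simpa [toddCoeff, hF, PowerSeries.coeff_mk] using h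

lemma todd_conv' (k : ℕ) :
    ∑ i ∈ range (k+1), toddCoeff i * ((1:ℚ) / ((k-i)+1).factorial)
      = if k = 0 then 1 else 0 := by
  set F : PowerSeries ℚ := PowerSeries.mk fun n => (1 : ℚ) / (n + 1).factorial with hF
  have hc : PowerSeries.constantCoeff F ≠ 0 := by
    simp [hF, PowerSeries.constantCoeff_mk]
  have h := congrArg (PowerSeries.coeff k) (PowerSeries.inv_mul_cancel F hc)
  rw [PowerSeries.coeff_mul, PowerSeries.coeff_one,
    Finset.Nat.sum_antidiagonal_eq_sum_range_succ_mk] at h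
  simpa [toddCoeff, hF, PowerSeries.coeff_mk] using h

lemma toddCoeff_zero : toddCoeff 0 = 1 := by
  have h := todd_conv 0
  simpa using h

open Finset

section
variable {K B : Type*} [Field K] [CharZero K] [Ring B] [Algebra K B]

lemma fac_ne' (n : ℕ) : ((n.factorial : K)) ≠ 0 :=
  Nat.cast_ne_zero.mpr (Nat.factorial_ne_zero n)

lemma fac_choose2 {i k : ℕ} (h : i ≤ k) :
    (k.factorial : K)⁻¹ * (k.choose i : K) = (i.factorial : K)⁻¹ * ((k-i).factorial : K)⁻¹ := by
  have h2 := Nat.choose_mul_factorial_mul_factorial h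
  have h3 : ((k.choose i : ℕ) : K) * (i.factorial : K) * ((k-i).factorial : K)
      = (k.factorial : K) := by exact_mod_cast congrArg (Nat.cast : ℕ → K) h2
  have h4 := fac_ne' (K := K) i
  have h5 := fac_ne' (K := K) (k - i)
  have h6 := fac_ne' (K := K) k
  field_simp
  linear_combination h3

lemma psum_exp_add (x y : B) (h : Commute x y) {M : ℕ} (hx : x ^ M = 0) (hy : y ^ M = 0) :
    ∑ k ∈ range (2*M), (k.factorial : K)⁻¹ • (x + y) ^ k
      = (∑ k ∈ range M, (k.factorial : K)⁻¹ • x ^ k)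
        * (∑ k ∈ range M, (k.factorial : K)⁻¹ • y ^ k) := by
  calc ∑ k ∈ range (2*M), (k.factorial : K)⁻¹ • (x + y) ^ k
      = ∑ k ∈ range (2*M), ∑ i ∈ range (k+1),
          ((i.factorial : K)⁻¹ * ((k-i).factorial : K)⁻¹) • (x ^ i * y ^ (k-i)) := by
        refine sum_congr rfl fun k _ => ?_
        rw [h.add_pow, smul_sum]
        refine sum_congr rfl fun i hi => ?_
        have hik : i ≤ k := Nat.lt_succ_iff.mp (mem_range.mp hi)
        rw [(Nat.commute_cast (x ^ i * y ^ (k-i)) (k.choose i)).eq, ← nsmul_eq_mul,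
          ← Nat.cast_smul_eq_nsmul K, smul_smul, ← fac_choose2 hik]
    _ = ∑ i ∈ range (2*M), ∑ j ∈ range (2*M - i),
          ((i.factorial : K)⁻¹ * ((j).factorial : K)⁻¹) • (x ^ i * y ^ j) :=
        triangle_sum (2*M) (fun i j => ((i.factorial : K)⁻¹ * ((j).factorial : K)⁻¹) • (x ^ i * y ^ j))
    _ = ∑ i ∈ range M, ∑ j ∈ range (2*M - i),
          ((i.factorial : K)⁻¹ * ((j).factorial : K)⁻¹) • (x ^ i * y ^ j) := by
        refine (Finset.sum_subset (range_subset_range.mpr (by omega)) ?_).symm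
        intro i _ hi
        have : M ≤ i := by simpa using le_of_not_gt (fun h' => hi (mem_range.mpr h'))
        rw [pow_eq_zero_of_le this hx]
        simp
    _ = ∑ i ∈ range M, ∑ j ∈ range M,
          ((i.factorial : K)⁻¹ * ((j).factorial : K)⁻¹) • (x ^ i * y ^ j) := by
        refine sum_congr rfl fun i hi => ?_
        have hiM := mem_range.mp hi
        refine (Finset.sum_subset (range_subset_range.mpr (by omega)) ?_).symm
        intro j _ hj
        have : M ≤ j := by simpa using le_of_not_gt (fun h' => hj (mem_range.mpr h'))
        rw [pow_eq_zero_of_le this hy]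
        simp
    _ = (∑ k ∈ range M, (k.factorial : K)⁻¹ • x ^ k)
        * (∑ k ∈ range M, (k.factorial : K)⁻¹ • y ^ k) := by
        rw [Finset.sum_mul_sum]
        exact sum_congr rfl fun i _ => sum_congr rfl fun j _ => (smul_mul_smul_comm _ _ _ _).symm
end

open Finset

section Main
variable {K A : Type*} [Field K] [CharZero K] [Ring A] [Algebra K A]

lemma nilp_ad (a : A) (N : ℕ) (hN : a ^ N = 0) :
    (LinearMap.mulLeft K a - LinearMap.mulRight K a) ^ (2*N - 1) = 0 := by
  have hcomm : Commute (LinearMap.mulLeft K a) (-(LinearMap.mulRight K a)) :=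
    Commute.neg_right (R := Module.End K A) (LinearMap.commute_mulLeft_right a a)
  have hLN : (LinearMap.mulLeft K a) ^ N = 0 := by
    rw [LinearMap.pow_mulLeft, hN, LinearMap.mulLeft_zero_eq_zero]
  have hRN : (-(LinearMap.mulRight K a)) ^ N = 0 := by
    rw [neg_pow (R := Module.End K A), LinearMap.pow_mulRight, hN, LinearMap.mulRight_zero_eq_zero, mul_zero]
  rw [sub_eq_add_neg, hcomm.add_pow]
  refine Finset.sum_eq_zero fun i hi => ?_
  have hi' : i ≤ 2*N - 1 := Nat.lt_succ_iff.mp (mem_range.mp hi)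
  rcases le_or_gt N i with h | h
  · rw [pow_eq_zero_of_le h hLN, zero_mul, zero_mul]
  · rw [pow_eq_zero_of_le (by omega) hRN, mul_zero, zero_mul]

lemma conj_exp (a d : A) (N : ℕ) (hN : a ^ N = 0) :
    (∑ k ∈ range (2*N), (k.factorial : K)⁻¹ •
        (((LinearMap.mulLeft K a - LinearMap.mulRight K a) ^ k) d))
      = (∑ k ∈ range N, (k.factorial : K)⁻¹ • a ^ k)
        * (d * (∑ k ∈ range N, ((-1:K)^k * (k.factorial : K)⁻¹) • a ^ k)) := by
  have hcomm : Commute (LinearMap.mulLeft K a) (-(LinearMap.mulRight K a)) :=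
    Commute.neg_right (R := Module.End K A) (LinearMap.commute_mulLeft_right a a)
  have hLN : (LinearMap.mulLeft K a) ^ N = 0 := by
    rw [LinearMap.pow_mulLeft, hN, LinearMap.mulLeft_zero_eq_zero]
  have hRN : (-(LinearMap.mulRight K a)) ^ N = 0 := by
    rw [neg_pow (R := Module.End K A), LinearMap.pow_mulRight, hN, LinearMap.mulRight_zero_eq_zero, mul_zero]
  have hfact := psum_exp_add (K := K) (LinearMap.mulLeft K a) (-(LinearMap.mulRight K a))
    hcomm hLN hRN
  rw [← sub_eq_add_neg] at hfact
  have happ := congrArg (fun F : Module.End K A => F d) hfact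
  simp only [LinearMap.sum_apply, LinearMap.smul_apply] at happ
  rw [happ]
  rw [Module.End.mul_apply]
  have hnegR : -(LinearMap.mulRight K a) = LinearMap.mulRight K (-a) := by
    ext z
    simp [mul_neg]
  have h1 : ((∑ k ∈ range N, (k.factorial : K)⁻¹ • (-(LinearMap.mulRight K a)) ^ k) : Module.End K A) d
      = d * (∑ k ∈ range N, ((-1:K)^k * (k.factorial : K)⁻¹) • a ^ k) := by
    rw [hnegR]
    simp only [LinearMap.sum_apply, LinearMap.smul_apply, LinearMap.pow_mulRight,
      LinearMap.mulRight_apply]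
    rw [Finset.mul_sum]
    refine sum_congr rfl fun k _ => ?_
    rw [show (-a) = (-1:K) • a from (neg_one_smul K a).symm, smul_pow, mul_smul_comm,
      mul_smul_comm, smul_smul, mul_comm ((k.factorial : K)⁻¹)]
  rw [h1]
  simp only [LinearMap.sum_apply, LinearMap.smul_apply, LinearMap.pow_mulLeft,
    LinearMap.mulLeft_apply]
  rw [Finset.sum_mul]
  refine sum_congr rfl fun k _ => ?_
  rw [smul_mul_assoc]

end Main

open Finset

section Main2
variable {K A : Type*} [Field K] [CharZero K] [Ring A] [Algebra K A]

lemma todd_conv_K (k : ℕ) :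
    ∑ i ∈ range (k+1), (((i+1).factorial : K))⁻¹ * ((toddCoeff (k-i) : K))
      = if k = 0 then (1:K) else 0 := by
  rw [show (if k = 0 then (1:K) else 0) = ((if k = 0 then (1:ℚ) else 0 : ℚ) : K) by
    split_ifs <;> simp]
  rw [← todd_conv k, Rat.cast_sum]
  refine sum_congr rfl fun i _ => ?_
  push_cast
  rw [one_div]

lemma todd_conv_K' (k : ℕ) :
    ∑ i ∈ range (k+1), ((toddCoeff i : K)) * ((((k-i)+1).factorial : K))⁻¹
      = if k = 0 then (1:K) else 0 := by
  rw [show (if k = 0 then (1:K) else 0) = ((if k = 0 then (1:ℚ) else 0 : ℚ) : K) by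
    split_ifs <;> simp]
  rw [← todd_conv' k, Rat.cast_sum]
  refine sum_congr rfl fun i _ => ?_
  push_cast
  rw [one_div]


end Main2

/-- Proposition 1: `exp(a)·d = (d+b)·exp(a)` iff
`[a,d] = b + ∑_{k≥1} α_k (ad_a)^k(b)` where `x/(e^x-1) = ∑ α_k x^k`. -/
theorem exp_intertwine_iff_todd {K A : Type*} [Field K] [CharZero K] [Ring A] [Algebra K A]
    (a b d : A) (N : ℕ) (hN : a ^ N = 0) :
    expNil (K := K) a N * d = (d + b) * expNil (K := K) a N ↔
    a * d - d * a = b + ∑ k ∈ Finset.Icc 1 (2 * N), ((toddCoeff k : K)) •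
      (((LinearMap.mulLeft K a - LinearMap.mulRight K a) ^ k) b) := by
  rcases Nat.eq_zero_or_pos N with rfl | hNpos
  · have hsub : Subsingleton A := subsingleton_of_zero_eq_one (by simpa using hN.symm)
    exact ⟨fun _ => Subsingleton.elim _ _, fun _ => Subsingleton.elim _ _⟩
  simp only [expNil]
  have had1 : (LinearMap.mulLeft K a - LinearMap.mulRight K a) ^ (2*N - 1) = 0 :=
    nilp_ad a N hN
  have had2 : (LinearMap.mulLeft K a - LinearMap.mulRight K a) ^ (2*N) = 0 :=
    pow_eq_zero_of_le (by omega) had1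
  -- E * E' = 1 and E' * E = 1
  have hEE' : (∑ k ∈ range N, (k.factorial : K)⁻¹ • a ^ k)
      * (∑ k ∈ range N, ((-1:K)^k * (k.factorial : K)⁻¹) • a ^ k) = 1 := by
    rw [psum_mul _ _ _ hN]
    rw [sum_congr rfl (fun k _ => by rw [exp_conv' (K := K) k])]
    simp only [ite_smul, one_smul, zero_smul,
      Finset.sum_ite_eq' (range N) 0 (fun k => a ^ k)]
    simp [hNpos]
  have hE'E : (∑ k ∈ range N, ((-1:K)^k * (k.factorial : K)⁻¹) • a ^ k)
      * (∑ k ∈ range N, (k.factorial : K)⁻¹ • a ^ k) = 1 := by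
    rw [psum_mul _ _ _ hN]
    rw [sum_congr rfl (fun k _ => by rw [exp_conv (K := K) k])]
    simp only [ite_smul, one_smul, zero_smul,
      Finset.sum_ite_eq' (range N) 0 (fun k => a ^ k)]
    simp [hNpos]
  -- f * g = 1
  have hfg1 := psum_mul (fun k => (((k+1).factorial : K))⁻¹) (fun k => ((toddCoeff k : K)))
    (LinearMap.mulLeft K a - LinearMap.mulRight K a) had2
  simp only [todd_conv_K, ite_smul, one_smul, zero_smul] at hfg1
  rw [Finset.sum_ite_eq' (range (2*N)) 0
    (fun k => (LinearMap.mulLeft K a - LinearMap.mulRight K a) ^ k),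
    if_pos (mem_range.mpr (by omega : 0 < 2*N)), pow_zero] at hfg1
  -- g * f = 1
  have hgf1 := psum_mul (fun k => ((toddCoeff k : K))) (fun k => (((k+1).factorial : K))⁻¹)
    (LinearMap.mulLeft K a - LinearMap.mulRight K a) had2
  simp only [todd_conv_K', ite_smul, one_smul, zero_smul] at hgf1
  rw [Finset.sum_ite_eq' (range (2*N)) 0
    (fun k => (LinearMap.mulLeft K a - LinearMap.mulRight K a) ^ k),
    if_pos (mem_range.mpr (by omega : 0 < 2*N)), pow_zero] at hgf1
  -- application versions
  have hfg_app : ∀ z : A, ∑ k ∈ range (2*N), (((k+1).factorial : K))⁻¹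
      • (((LinearMap.mulLeft K a - LinearMap.mulRight K a) ^ k)
        (∑ j ∈ range (2*N), ((toddCoeff j : K))
          • (((LinearMap.mulLeft K a - LinearMap.mulRight K a) ^ j) z))) = z := by
    intro z
    have h := congrArg (fun F => F z) hfg1
    simp only [Module.End.mul_apply, LinearMap.sum_apply, LinearMap.smul_apply,
      Module.End.one_apply, map_sum, map_smul, Finset.smul_sum, smul_smul] at h ⊢
    rw [Finset.sum_comm] at h
    simp only [mul_comm] at h ⊢
    exact h
  have hgf_app : ∀ z : A, ∑ k ∈ range (2*N), ((toddCoeff k : K))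
      • (((LinearMap.mulLeft K a - LinearMap.mulRight K a) ^ k)
        (∑ j ∈ range (2*N), (((j+1).factorial : K))⁻¹
          • (((LinearMap.mulLeft K a - LinearMap.mulRight K a) ^ j) z))) = z := by
    intro z
    have h := congrArg (fun F => F z) hgf1
    simp only [Module.End.mul_apply, LinearMap.sum_apply, LinearMap.smul_apply,
      Module.End.one_apply, map_sum, map_smul, Finset.smul_sum, smul_smul] at h ⊢
    rw [Finset.sum_comm] at h
    simp only [mul_comm] at h ⊢
    exact h
  -- exp(ad) applied to d equals d + f(ad d)
  have hSd : ∑ k ∈ range (2*N), (k.factorial : K)⁻¹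
      • (((LinearMap.mulLeft K a - LinearMap.mulRight K a) ^ k) d)
      = d + ∑ k ∈ range (2*N), (((k+1).factorial : K))⁻¹
        • (((LinearMap.mulLeft K a - LinearMap.mulRight K a) ^ k)
          ((LinearMap.mulLeft K a - LinearMap.mulRight K a) d)) := by
    conv_lhs => rw [show 2*N = (2*N-1)+1 from by omega, Finset.sum_range_succ']
    conv_rhs => rw [show 2*N = (2*N-1)+1 from by omega, Finset.sum_range_succ]
    rw [had1]
    simp only [pow_succ, Module.End.mul_apply, pow_zero, Module.End.one_apply,
      Nat.factorial_zero, Nat.cast_one, inv_one, one_smul, LinearMap.zero_apply,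
      smul_zero, add_zero]
    rw [add_comm]
  have hconj := conj_exp (K := K) a d N hN
  -- rewrite the Icc sum
  have hIcc : b + ∑ k ∈ Finset.Icc 1 (2 * N), ((toddCoeff k : K)) •
      (((LinearMap.mulLeft K a - LinearMap.mulRight K a) ^ k) b)
      = ∑ k ∈ range (2*N), ((toddCoeff k : K)) •
        (((LinearMap.mulLeft K a - LinearMap.mulRight K a) ^ k) b) := by
    have h1 : ∑ k ∈ Finset.Icc 1 (2 * N), ((toddCoeff k : K)) •
        (((LinearMap.mulLeft K a - LinearMap.mulRight K a) ^ k) b)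
        = ∑ k ∈ Finset.Ico 1 (2 * N), ((toddCoeff k : K)) •
          (((LinearMap.mulLeft K a - LinearMap.mulRight K a) ^ k) b) := by
      rw [← Finset.Ico_add_one_right_eq_Icc, Finset.sum_Ico_succ_top (by omega : 1 ≤ 2*N), had2]
      simp
    rw [h1, Finset.range_eq_Ico, Finset.sum_eq_sum_Ico_succ_bot (by omega : 0 < 2*N)]
    simp [toddCoeff_zero]
  rw [hIcc]
  -- main chain
  constructor
  · intro h
    have h2 : (∑ k ∈ range N, (k.factorial : K)⁻¹ • a ^ k)
        * (d * (∑ k ∈ range N, ((-1:K)^k * (k.factorial : K)⁻¹) • a ^ k)) = d + b := by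
      calc (∑ k ∈ range N, (k.factorial : K)⁻¹ • a ^ k)
          * (d * (∑ k ∈ range N, ((-1:K)^k * (k.factorial : K)⁻¹) • a ^ k))
          = ((∑ k ∈ range N, (k.factorial : K)⁻¹ • a ^ k) * d)
            * (∑ k ∈ range N, ((-1:K)^k * (k.factorial : K)⁻¹) • a ^ k) := by
            rw [mul_assoc]
        _ = ((d + b) * (∑ k ∈ range N, (k.factorial : K)⁻¹ • a ^ k))
            * (∑ k ∈ range N, ((-1:K)^k * (k.factorial : K)⁻¹) • a ^ k) := by rw [h]
        _ = (d + b) * ((∑ k ∈ range N, (k.factorial : K)⁻¹ • a ^ k)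
            * (∑ k ∈ range N, ((-1:K)^k * (k.factorial : K)⁻¹) • a ^ k)) := by
            rw [mul_assoc]
        _ = d + b := by rw [hEE', mul_one]
    rw [← hconj, hSd] at h2
    have h3 : ∑ k ∈ range (2*N), (((k+1).factorial : K))⁻¹
        • (((LinearMap.mulLeft K a - LinearMap.mulRight K a) ^ k)
          ((LinearMap.mulLeft K a - LinearMap.mulRight K a) d)) = b := by
      exact add_left_cancel h2
    have h4 : a * d - d * a = (LinearMap.mulLeft K a - LinearMap.mulRight K a) d := rfl
    rw [h4, ← h3]
    exact (hgf_app ((LinearMap.mulLeft K a - LinearMap.mulRight K a) d)).symm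
  · intro h
    have h4 : a * d - d * a = (LinearMap.mulLeft K a - LinearMap.mulRight K a) d := rfl
    rw [h4] at h
    have h5 : ∑ k ∈ range (2*N), (((k+1).factorial : K))⁻¹
        • (((LinearMap.mulLeft K a - LinearMap.mulRight K a) ^ k)
          ((LinearMap.mulLeft K a - LinearMap.mulRight K a) d)) = b := by
      rw [h]
      exact hfg_app b
    have h2 : (∑ k ∈ range N, (k.factorial : K)⁻¹ • a ^ k)
        * (d * (∑ k ∈ range N, ((-1:K)^k * (k.factorial : K)⁻¹) • a ^ k)) = d + b := by
      rw [← hconj, hSd, h5]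
    calc (∑ k ∈ range N, (k.factorial : K)⁻¹ • a ^ k) * d
        = ((∑ k ∈ range N, (k.factorial : K)⁻¹ • a ^ k) * d)
          * ((∑ k ∈ range N, ((-1:K)^k * (k.factorial : K)⁻¹) • a ^ k)
            * (∑ k ∈ range N, (k.factorial : K)⁻¹ • a ^ k)) := by rw [hE'E, mul_one]
      _ = ((∑ k ∈ range N, (k.factorial : K)⁻¹ • a ^ k)
          * (d * (∑ k ∈ range N, ((-1:K)^k * (k.factorial : K)⁻¹) • a ^ k)))
          * (∑ k ∈ range N, (k.factorial : K)⁻¹ • a ^ k) := by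
          rw [← mul_assoc, ← mul_assoc, mul_assoc _ d _]
      _ = (d + b) * (∑ k ∈ range N, (k.factorial : K)⁻¹ • a ^ k) := by rw [h2]
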